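/- For every integer n ≥ 2, the Jordan constant of the dicyclic group Dic_{4n} of order 4n equals 2. -/

import Mathlib

/-- `G` satisfies the Jordan property with constant `d`: every finite subgroup `H` of `G`
contains a normal abelian subgroup of index at most `d` in `H`. -/
def IsJordanWith (G : Type*) [Group G] (d : ℕ) : Prop :=
  ∀ H : Subgroup G, Finite H →
    ∃ A : Subgroup H, A.Normal ∧ (∀ x y : A, x * y = y * x) ∧ A.index ≤ d

/-- `G` is a Jordan group. -/
def IsJordanGroup (G : Type*) [Group G] : Prop :=
  ∃ d : ℕ, 0 < d ∧ IsJordanWith G d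

/-- The Jordan constant of `G`: the minimal `d > 0` witnessing the Jordan property. -/
noncomputable def jordanConstant (G : Type*) [Group G] : ℕ :=
  sInf {d : ℕ | 0 < d ∧ IsJordanWith G d}

open QuaternionGroup Subgroup in
lemma isJordanWith_two_dicyclic (n : ℕ) (hn : 2 ≤ n) :
    IsJordanWith (QuaternionGroup n) 2 := by
  haveI : NeZero n := ⟨by omega⟩
  set C : Subgroup (QuaternionGroup n) := zpowers (a 1) with hC
  have hCnormal : C.Normal := by
    constructor
    intro g hg h
    obtain ⟨k, rfl⟩ := mem_zpowers_iff.mp hg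
    have : h * (a 1) ^ k * h⁻¹ = (h * a 1 * h⁻¹) ^ k := by rw [conj_zpow]
    rw [this]
    apply zpow_mem
    have inv_a : ∀ i : ZMod (2 * n), (a i)⁻¹ = a (-i) := fun _ => rfl
    have inv_xa : ∀ i : ZMod (2 * n), (xa i)⁻¹ = xa ((n : ZMod (2 * n)) + i) := fun _ => rfl
    have h2n : ((2 * n : ℕ) : ZMod (2 * n)) = 0 := ZMod.natCast_self _
    push_cast at h2n
    rcases h with i | i
    · have h3 : a i * a 1 * (a i)⁻¹ = a 1 := by
        rw [inv_a, a_mul_a, a_mul_a]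
        congr 1
        ring
      rw [h3]; exact mem_zpowers _
    · have h4 : xa i * a 1 * (xa i)⁻¹ = (a 1)⁻¹ := by
        rw [inv_a, xa_mul_a, inv_xa, xa_mul_xa]
        congr 1
        linear_combination h2n
      rw [h4]
      exact inv_mem (mem_zpowers _)
  have hCindex : C.index = 2 := by
    have h1 : C.index * Nat.card C = Nat.card (QuaternionGroup n) := C.index_mul_card
    rw [Nat.card_zpowers, orderOf_a_one, Nat.card_eq_fintype_card, card] at h1
    exact Nat.eq_of_mul_eq_mul_right (by omega : 0 < 2 * n) (by rw [h1]; ring)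
  intro H _
  refine ⟨C.subgroupOf H, ?_, ?_, ?_⟩
  · exact Subgroup.Normal.subgroupOf hCnormal H
  · rintro ⟨⟨x, hxH⟩, hx⟩ ⟨⟨y, hyH⟩, hy⟩
    rw [Subgroup.mem_subgroupOf] at hx hy
    obtain ⟨k, hk'⟩ := mem_zpowers_iff.mp hx
    obtain ⟨l, hl'⟩ := mem_zpowers_iff.mp hy
    have hk : a 1 ^ k = x := hk'
    have hl : a 1 ^ l = y := hl'
    have hxy : x * y = y * x := by rw [← hk, ← hl, ← zpow_add, ← zpow_add, add_comm]
    ext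
    exact hxy
  · have hdvd : (C.subgroupOf H).index ∣ C.index := relIndex_dvd_index_of_normal C H
    rw [hCindex] at hdvd
    exact Nat.le_of_dvd (by norm_num) hdvd

open QuaternionGroup Subgroup in
lemma not_isJordanWith_one_dicyclic (n : ℕ) (hn : 2 ≤ n) :
    ¬ IsJordanWith (QuaternionGroup n) 1 := by
  haveI : NeZero n := ⟨by omega⟩
  intro h
  obtain ⟨A, -, hcomm, hind⟩ := h ⊤ inferInstance
  have hindpos : A.index ≠ 0 := A.index_ne_zero_of_finite
  have hA : A = ⊤ := Subgroup.index_eq_one.mp (by omega)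
  subst hA
  have key := hcomm ⟨⟨a 1, trivial⟩, trivial⟩ ⟨⟨xa 0, trivial⟩, trivial⟩
  have key2 : (a 1 : QuaternionGroup n) * xa 0 = xa 0 * a 1 :=
    congrArg (fun z => (z.1.1 : QuaternionGroup n)) key
  rw [a_mul_xa, xa_mul_a] at key2
  injection key2 with h2
  rw [zero_sub, zero_add, neg_eq_iff_add_eq_zero] at h2
  have : ((2 : ℕ) : ZMod (2 * n)) = 0 := by push_cast; linear_combination h2
  rw [ZMod.natCast_eq_zero_iff] at this
  have := Nat.le_of_dvd (by norm_num) this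
  omega

/-- For every `n ≥ 2`, the dicyclic group of order `4n` (called `QuaternionGroup n`
in Mathlib) has Jordan constant `2`. -/
theorem jordanConstant_dicyclic (n : ℕ) (hn : 2 ≤ n) :
    jordanConstant (QuaternionGroup n) = 2 := by
  have h2 : (2 : ℕ) ∈ {d : ℕ | 0 < d ∧ IsJordanWith (QuaternionGroup n) d} :=
    ⟨by norm_num, isJordanWith_two_dicyclic n hn⟩
  refine le_antisymm (Nat.sInf_le h2) (le_csInf ⟨2, h2⟩ ?_)
  rintro d ⟨hd0, hd⟩
  by_contra hlt
  interval_cases d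
  exact not_isJordanWith_one_dicyclic n hn hd
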